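/- Let T ⊆ ℕ* be a finitely branching rooted tree in which every node has at least two successors, and let S ⊆ T be a subtree without leaves that is level-wise uniformly branching. For every real r with 0 < r < liminf_{n→∞} log|S_n|/log|T_n|, the r-dimensional Hausdorff (outer) measure of [S] in the ultrametric space [T] is at least 1. -/

import Mathlib

open Filter MeasureTheory
open scoped ENNReal NNReal

namespace FractalTree

/-- The `n`-th level of a tree `T ⊆ ℕ*`: the strings in `T` of length `n`. -/
def level (T : Set (List ℕ)) (n : ℕ) : Set (List ℕ) := {σ | σ ∈ T ∧ σ.length = n}

/-- A tree is a nonempty set of finite sequences closed under initial segments. -/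
def IsTree (T : Set (List ℕ)) : Prop :=
  T.Nonempty ∧ ∀ σ ∈ T, ∀ τ : List ℕ, τ <+: σ → τ ∈ T

/-- The immediate successors of a node `σ` in `T`. -/
def succs (T : Set (List ℕ)) (σ : List ℕ) : Set ℕ := {a | σ ++ [a] ∈ T}

/-- Every node of `T` has finitely many immediate successors. -/
def FinBranching (T : Set (List ℕ)) : Prop := ∀ σ ∈ T, (succs T σ).Finite

/-- Every node of `T` has at least two immediate successors. -/
def AtLeastTwo (T : Set (List ℕ)) : Prop :=
  ∀ σ ∈ T, ∃ a b : ℕ, a ≠ b ∧ a ∈ succs T σ ∧ b ∈ succs T σ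

/-- Every node of `S` has at least one immediate successor (no leaves). -/
def NoLeaves (S : Set (List ℕ)) : Prop := ∀ σ ∈ S, ∃ a : ℕ, a ∈ succs S σ

/-- `S` is level-wise uniformly branching: the number of immediate successors of a node
only depends on its level. -/
def UnifBranching (S : Set (List ℕ)) : Prop :=
  ∀ n : ℕ, ∀ σ ∈ level S n, ∀ τ ∈ level S n, (succs S σ).ncard = (succs S τ).ncard

/-- The initial segment of length `n` of an infinite sequence `f`. -/
def seg (f : ℕ → ℕ) (n : ℕ) : List ℕ := (List.range n).map f

/-- The set `[T]` of infinite paths through `T`. -/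
def paths (T : Set (List ℕ)) : Set (ℕ → ℕ) := {f | ∀ n : ℕ, seg f n ∈ T}

open Classical in
/-- The ultrametric on `[T]`: `d(f,g) = 1/|T_n|` where `n` is the least index with
`f n ≠ g n`, and `d(f,f) = 0`. -/
noncomputable def treeDist (T : Set (List ℕ)) (f g : ℕ → ℕ) : ℝ :=
  if h : ∃ n, f n ≠ g n then 1 / ((level T (Nat.find h)).ncard : ℝ) else 0


variable {T S : Set (List ℕ)}

@[simp] lemma seg_length (f : ℕ → ℕ) (n : ℕ) : (seg f n).length = n := by
  simp [seg]

lemma seg_succ (f : ℕ → ℕ) (n : ℕ) : seg f (n + 1) = seg f n ++ [f n] := by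
  simp [seg, List.range_succ]

lemma seg_take (f : ℕ → ℕ) {n m : ℕ} (h : n ≤ m) : (seg f m).take n = seg f n := by
  simp [seg, ← List.map_take, List.take_range, Nat.min_eq_left h]

lemma seg_prefix (f : ℕ → ℕ) {n m : ℕ} (h : n ≤ m) : seg f n <+: seg f m := by
  rw [← seg_take f h]; exact List.take_prefix _ _

lemma seg_eq_of_eqOn {f g : ℕ → ℕ} {n : ℕ} (h : ∀ j < n, f j = g j) :
    seg f n = seg g n := by
  apply List.map_congr_left
  intro a ha; exact h a (List.mem_range.mp ha)

lemma eq_of_seg_eq {f g : ℕ → ℕ} {n : ℕ} (h : seg f n = seg g n) {j : ℕ} (hj : j < n) :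
    f j = g j := by
  have := congrArg (fun l => l.getD j 0) h
  simpa [seg, List.getD_eq_getElem?_getD, List.getElem?_map, List.getElem?_range hj] using this

lemma nil_mem (hT : IsTree T) : [] ∈ T := by
  obtain ⟨⟨σ, hσ⟩, hcl⟩ := hT
  exact hcl σ hσ [] List.nil_prefix

lemma level_zero (hT : IsTree T) : level T 0 = {([] : List ℕ)} := by
  ext τ
  constructor
  · rintro ⟨_, hlen⟩
    simpa using List.length_eq_zero_iff.mp hlen
  · rintro rfl
    exact ⟨nil_mem hT, rfl⟩

/-- decomposition of a level n+1 node -/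
lemma mem_level_succ_iff (hT : IsTree T) {n : ℕ} {τ : List ℕ} :
    τ ∈ level T (n + 1) ↔ ∃ σ ∈ level T n, ∃ a ∈ succs T σ, τ = σ ++ [a] := by
  constructor
  · rintro ⟨hτ, hlen⟩
    have hne : τ ≠ [] := by intro h; simp [h] at hlen
    have hdec : τ.dropLast ++ [τ.getLast hne] = τ := List.dropLast_append_getLast hne
    refine ⟨τ.dropLast, ⟨hT.2 τ hτ _ ⟨[τ.getLast hne], hdec⟩, by simp [hlen]⟩, τ.getLast hne, ?_, hdec.symm⟩
    · show τ.dropLast ++ [τ.getLast hne] ∈ T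
      rw [hdec]; exact hτ
  · rintro ⟨σ, ⟨hσ, hlen⟩, a, ha, rfl⟩
    exact ⟨ha, by simp [hlen]⟩

lemma level_finite (hT : IsTree T) (hTfin : FinBranching T) (n : ℕ) :
    (level T n).Finite := by
  induction n with
  | zero => rw [level_zero hT]; exact Set.finite_singleton _
  | succ n ih =>
    have : level T (n + 1) ⊆ ⋃ σ ∈ level T n, (fun a => σ ++ [a]) '' succs T σ := by
      intro τ hτ
      obtain ⟨σ, hσ, a, ha, rfl⟩ := (mem_level_succ_iff hT).mp hτ
      exact Set.mem_biUnion hσ ⟨a, ha, rfl⟩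
    exact Set.Finite.subset (Set.Finite.biUnion ih fun σ hσ => (hTfin σ hσ.1).image _) this

lemma level_nonempty (hT : IsTree T) (h1 : ∀ σ ∈ T, ∃ a : ℕ, a ∈ succs T σ) (n : ℕ) :
    (level T n).Nonempty := by
  induction n with
  | zero => exact ⟨[], nil_mem hT, rfl⟩
  | succ n ih =>
    obtain ⟨σ, hσ⟩ := ih
    obtain ⟨a, ha⟩ := h1 σ hσ.1
    exact ⟨σ ++ [a], ha, by simp [hσ.2]⟩

lemma level_ncard_pos (hT : IsTree T) (hTfin : FinBranching T)
    (h1 : ∀ σ ∈ T, ∃ a : ℕ, a ∈ succs T σ) (n : ℕ) : 0 < (level T n).ncard :=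
  Set.Nonempty.ncard_pos (level_nonempty hT h1 n) (hs := level_finite hT hTfin n)

/-- the slice of level n+1 over a node θ of level n equals an image of succs -/
lemma slice_eq (hS : IsTree S) {n : ℕ} {θ : List ℕ} (hθ : θ ∈ level S n) :
    {τ' | τ' ∈ level S (n + 1) ∧ τ'.take n = θ} = (fun a => θ ++ [a]) '' succs S θ := by
  ext τ'
  constructor
  · rintro ⟨hτ', htake⟩
    obtain ⟨σ, hσ, a, ha, rfl⟩ := (mem_level_succ_iff hS).mp hτ'
    have : σ = θ := by rw [← htake, List.take_left' hσ.2]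
    subst this
    exact ⟨a, ha, rfl⟩
  · rintro ⟨a, ha, rfl⟩
    refine ⟨(mem_level_succ_iff hS).mpr ⟨θ, hθ, a, ha, rfl⟩, List.take_left' hθ.2⟩

lemma slice_ncard (hS : IsTree S) {n : ℕ} {θ : List ℕ} (hθ : θ ∈ level S n) :
    {τ' | τ' ∈ level S (n + 1) ∧ τ'.take n = θ}.ncard = (succs S θ).ncard := by
  rw [slice_eq hS hθ]
  apply Set.ncard_image_of_injOn
  intro a _ b _ h
  simpa using h

lemma card_step (hS : IsTree S) (hSfin : FinBranching S) (hSub : UnifBranching S)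
    {n : ℕ} {θ₀ : List ℕ} (hθ₀ : θ₀ ∈ level S n) (D : Set (List ℕ)) (hD : D ⊆ level S n) :
    {τ' | τ' ∈ level S (n + 1) ∧ τ'.take n ∈ D}.ncard = D.ncard * (succs S θ₀).ncard := by
  classical
  have hfin1 : (level S (n+1)).Finite := level_finite hS hSfin (n+1)
  have hfinD : D.Finite := (level_finite hS hSfin n).subset hD
  have hfinE : {τ' | τ' ∈ level S (n + 1) ∧ τ'.take n ∈ D}.Finite :=
    hfin1.subset (fun x hx => hx.1)
  rw [Set.ncard_eq_toFinset_card _ hfinE, Set.ncard_eq_toFinset_card _ hfinD]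
  rw [Finset.card_eq_sum_card_fiberwise (f := fun τ' => τ'.take n)
    (t := hfinD.toFinset) (fun x hx => by
      have hx : x ∈ hfinE.toFinset := hx
      simp only [Finset.mem_coe, Set.Finite.mem_toFinset] at hx ⊢; exact hx.2)]
  rw [Finset.sum_congr rfl (fun θ hθ => ?_), Finset.sum_const, smul_eq_mul]
  have hθD : θ ∈ D := by simpa using hθ
  have hθlev : θ ∈ level S n := hD hθD
  have : (Finset.filter (fun a => a.take n = θ) hfinE.toFinset).card
      = {τ' | τ' ∈ level S (n + 1) ∧ τ'.take n = θ}.ncard := by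
    rw [Set.ncard_eq_toFinset_card _ (hfin1.subset (fun x hx => hx.1))]
    congr 1
    ext τ'
    simp only [Finset.mem_filter, Set.Finite.mem_toFinset, Set.mem_setOf_eq]
    constructor
    · rintro ⟨⟨h1, h2⟩, h3⟩; exact ⟨h1, h3⟩
    · rintro ⟨h1, h3⟩; exact ⟨⟨h1, h3 ▸ hθD⟩, h3⟩
  rw [this, slice_ncard hS hθlev, hSub n θ hθlev θ₀ hθ₀]

lemma take_mem_level (hS : IsTree S) {N n : ℕ} (h : n ≤ N) {τ' : List ℕ}
    (hτ' : τ' ∈ level S N) : τ'.take n ∈ level S n := by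
  refine ⟨hS.2 τ' hτ'.1 _ (List.take_prefix _ _), ?_⟩
  simp [List.length_take, hτ'.2, Nat.min_eq_left h]

lemma prod_formula (hS : IsTree S) (hSfin : FinBranching S) (hSub : UnifBranching S)
    (hne : ∀ n, (level S n).Nonempty) {τ : List ℕ} (hτ : τ ∈ S) :
    ∀ N, τ.length ≤ N →
      (level S τ.length).ncard * {τ' | τ' ∈ level S N ∧ τ <+: τ'}.ncard
        = (level S N).ncard := by
  intro N hNle
  induction N, hNle using Nat.le_induction with
  | base =>
    have : {τ' | τ' ∈ level S τ.length ∧ τ <+: τ'} = {τ} := by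
      ext τ'
      simp only [Set.mem_setOf_eq, Set.mem_singleton_iff]
      constructor
      · rintro ⟨hl, hp⟩
        exact (List.IsPrefix.eq_of_length hp hl.2.symm).symm
      · rintro rfl; exact ⟨⟨hτ, rfl⟩, List.prefix_refl _⟩
    rw [this, Set.ncard_singleton, mul_one]
  | succ N hN ih =>
    obtain ⟨θ₀, hθ₀⟩ := hne N
    have h1 : {τ' | τ' ∈ level S (N + 1) ∧ τ <+: τ'}
        = {τ' | τ' ∈ level S (N + 1) ∧ τ'.take N ∈ {θ | θ ∈ level S N ∧ τ <+: θ}} := by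
      ext τ'
      simp only [Set.mem_setOf_eq]
      constructor
      · rintro ⟨hl, hp⟩
        exact ⟨hl, take_mem_level hS (Nat.le_succ N) hl,
          (List.prefix_take_iff).mpr ⟨hp, hN⟩⟩
      · rintro ⟨hl, _, hp⟩
        exact ⟨hl, ((List.prefix_take_iff).mp hp).1⟩
    have h2 : level S (N + 1) = {τ' | τ' ∈ level S (N + 1) ∧ τ'.take N ∈ level S N} := by
      ext τ'
      exact ⟨fun h => ⟨h, take_mem_level hS (Nat.le_succ N) h⟩, fun h => h.1⟩
    rw [h1, card_step hS hSfin hSub hθ₀ _ (fun θ hθ => hθ.1),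
      h2, card_step hS hSfin hSub hθ₀ _ (fun θ hθ => hθ), ← ih, mul_assoc]

lemma level_ncard_pos' (hS : IsTree S) (hSfin : FinBranching S)
    (hne : ∀ n, (level S n).Nonempty) (n : ℕ) : 0 < (level S n).ncard :=
  Set.Nonempty.ncard_pos (hne n) (hs := level_finite hS hSfin n)

lemma list_eq_take_append {l : List ℕ} {n : ℕ} (h : l.length = n + 1) :
    l = l.take n ++ [l.getD n 0] := by
  have hn : n < l.length := by omega
  have h2 : l.drop n = l[n] :: l.drop (n + 1) := List.drop_eq_getElem_cons hn
  have h3 : l.drop (n + 1) = [] := List.drop_eq_nil_of_le (by omega)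
  rw [List.getD_eq_getElem l 0 hn]
  conv_lhs => rw [← List.take_append_drop n l]
  rw [h2, h3]

lemma konig_level (hS : IsTree S) (hSfin : FinBranching S) (σ : ℕ → List ℕ)
    (hcov : paths S ⊆ ⋃ i, {g | seg g (σ i).length = σ i}) :
    ∃ N, ∀ τ ∈ level S N, ∃ i, σ i <+: τ := by
  by_contra hcon
  push_neg at hcon
  set Bad : ℕ → Set (List ℕ) := fun N => {τ | τ ∈ level S N ∧ ∀ i, ¬ σ i <+: τ} with hBad
  haveI hFin : ∀ N, Finite ↥(Bad N) := fun N =>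
    ((level_finite hS hSfin N).subset (fun x hx => hx.1)).to_subtype
  haveI hNe : ∀ N, Nonempty ↥(Bad N) := by
    intro N
    obtain ⟨τ, hτ, hbad⟩ := hcon N
    exact ⟨⟨τ, hτ, hbad⟩⟩
  have hπmem : ∀ {i j : ℕ}, i ≤ j → ∀ (τ : ↥(Bad j)), τ.val.take i ∈ Bad i := by
    intro i j hij τ
    refine ⟨take_mem_level hS hij τ.2.1, fun k hk => τ.2.2 k (hk.trans (List.take_prefix _ _))⟩
  obtain ⟨f, hf⟩ := exists_seq_forall_proj_of_forall_finite
    (α := fun N => ↥(Bad N))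
    (π := fun {i j} hij τ => ⟨τ.val.take i, hπmem hij τ⟩)
    (fun i a => by
      ext1
      exact List.take_of_length_le (le_of_eq a.2.1.2))
    (fun i j k hij hjk a => by
      ext1
      simp only
      rw [List.take_take, Nat.min_eq_left hij])
    (fun i a => Set.toFinite _)
  set g : ℕ → ℕ := fun n => (f (n + 1)).val.getD n 0 with hg
  have hseg : ∀ n, seg g n = (f n).val := by
    intro n
    induction n with
    | zero =>
      have : (f 0).val.length = 0 := (f 0).2.1.2
      simp [seg, List.length_eq_zero_iff.mp this]
    | succ n ih =>
      have hlen : (f (n + 1)).val.length = n + 1 := (f (n + 1)).2.1.2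
      have htake : (f (n + 1)).val.take n = (f n).val :=
        congrArg Subtype.val (hf (Nat.le_succ n))
      rw [seg_succ, ih, ← htake]
      exact (list_eq_take_append hlen).symm
  have hgpaths : g ∈ paths S := fun n => by rw [hseg n]; exact (f n).2.1.1
  have hg2 := hcov hgpaths
  rw [Set.mem_iUnion] at hg2
  obtain ⟨i, hi⟩ := hg2
  exact (f (σ i).length).2.2 i (by rw [← hseg, hi])

lemma counting (hS : IsTree S) (hSfin : FinBranching S) (hSub : UnifBranching S)
    (hne : ∀ n, (level S n).Nonempty) (σ : ℕ → List ℕ) (hσ : ∀ i, σ i ∈ S)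
    (hcov : paths S ⊆ ⋃ i, {g | seg g (σ i).length = σ i}) :
    1 ≤ ∑' i, ((level S (σ i).length).ncard : ℝ≥0∞)⁻¹ := by
  classical
  obtain ⟨N, hN⟩ := konig_level hS hSfin σ hcov
  have hfinL : (level S N).Finite := level_finite hS hSfin N
  set F : Finset (List ℕ) := hfinL.toFinset with hF
  set c : List ℕ → ℕ := fun τ => if h : ∃ i, (σ i <+: τ) then h.choose else 0 with hc
  have hcp : ∀ τ ∈ level S N, σ (c τ) <+: τ := by
    intro τ hτ
    have h : ∃ i, σ i <+: τ := hN τ hτ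
    simp only [hc, dif_pos h]
    exact h.choose_spec
  set I : Finset ℕ := F.image c with hI
  set ext : ℕ → ℕ := fun i => {τ' | τ' ∈ level S N ∧ σ i <+: τ'}.ncard with hext
  have hlen : ∀ i ∈ I, (σ i).length ≤ N := by
    intro i hi
    obtain ⟨τ, hτF, hcτ⟩ := Finset.mem_image.mp hi
    have hτ : τ ∈ level S N := by simpa [hF] using hτF
    exact hcτ ▸ (hcp τ hτ).length_le.trans (le_of_eq hτ.2)
  have key1 : ∀ i ∈ I, (level S (σ i).length).ncard * ext i = (level S N).ncard :=
    fun i hi => prod_formula hS hSfin hSub hne (hσ i) N (hlen i hi)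
  have key2 : (level S N).ncard ≤ ∑ i ∈ I, ext i := by
    rw [Set.ncard_eq_toFinset_card _ hfinL, ← hF]
    rw [Finset.card_eq_sum_card_fiberwise (f := c) (t := I)
      (fun x hx => Finset.mem_image_of_mem c hx)]
    refine Finset.sum_le_sum (fun i hi => ?_)
    have hsub : ↑(F.filter (fun τ => c τ = i)) ⊆ {τ' | τ' ∈ level S N ∧ σ i <+: τ'} := by
      intro τ hτ
      simp only [Finset.coe_filter, Set.mem_setOf_eq, hF, Set.Finite.mem_toFinset] at hτ
      exact ⟨hτ.1, hτ.2 ▸ hcp τ hτ.1⟩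
    have hfin' : {τ' | τ' ∈ level S N ∧ σ i <+: τ'}.Finite := hfinL.subset fun x hx => hx.1
    calc (F.filter (fun τ => c τ = i)).card
        = (↑(F.filter (fun τ => c τ = i)) : Set (List ℕ)).ncard := (Set.ncard_coe_finset _).symm
      _ ≤ ext i := Set.ncard_le_ncard hsub hfin'
  -- now the ℝ≥0∞ computation
  have hLpos : 0 < (level S N).ncard := level_ncard_pos' hS hSfin hne N
  have hL0 : ((level S N).ncard : ℝ≥0∞) ≠ 0 := by exact_mod_cast hLpos.ne'
  have hLtop : ((level S N).ncard : ℝ≥0∞) ≠ ⊤ := ENNReal.natCast_ne_top _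
  have hterm : ∀ i ∈ I, (ext i : ℝ≥0∞) * ((level S N).ncard : ℝ≥0∞)⁻¹
      = ((level S (σ i).length).ncard : ℝ≥0∞)⁻¹ := by
    intro i hi
    have hext0 : ext i ≠ 0 := by
      obtain ⟨τ, hτF, hcτ⟩ := Finset.mem_image.mp hi
      have hτ : τ ∈ level S N := by simpa [hF] using hτF
      have : τ ∈ {τ' | τ' ∈ level S N ∧ σ i <+: τ'} := ⟨hτ, hcτ ▸ hcp τ hτ⟩
      have hfin' : {τ' | τ' ∈ level S N ∧ σ i <+: τ'}.Finite := hfinL.subset fun x hx => hx.1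
      exact (Set.Nonempty.ncard_pos ⟨τ, this⟩ (hs := hfin')).ne'
    have hlv0 : ((level S (σ i).length).ncard : ℝ≥0∞) ≠ 0 := by
      exact_mod_cast (level_ncard_pos' hS hSfin hne _).ne'
    rw [← key1 i hi]
    push_cast
    rw [ENNReal.mul_inv (Or.inl hlv0) (Or.inl (ENNReal.natCast_ne_top _))]
    rw [← mul_assoc, mul_comm (ext i : ℝ≥0∞), mul_assoc,
      ENNReal.mul_inv_cancel (by exact_mod_cast hext0) (ENNReal.natCast_ne_top _), mul_one]
  calc (1 : ℝ≥0∞) = ((level S N).ncard : ℝ≥0∞) * ((level S N).ncard : ℝ≥0∞)⁻¹ :=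
        (ENNReal.mul_inv_cancel hL0 hLtop).symm
    _ ≤ ((∑ i ∈ I, ext i : ℕ) : ℝ≥0∞) * ((level S N).ncard : ℝ≥0∞)⁻¹ := by
        have : ((level S N).ncard : ℝ≥0∞) ≤ ((∑ i ∈ I, ext i : ℕ) : ℝ≥0∞) := by
          exact_mod_cast key2
        exact mul_le_mul_left this _
    _ = ∑ i ∈ I, (ext i : ℝ≥0∞) * ((level S N).ncard : ℝ≥0∞)⁻¹ := by
        push_cast
        rw [Finset.sum_mul]
    _ = ∑ i ∈ I, ((level S (σ i).length).ncard : ℝ≥0∞)⁻¹ := Finset.sum_congr rfl hterm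
    _ ≤ ∑' i, ((level S (σ i).length).ncard : ℝ≥0∞)⁻¹ := ENNReal.sum_le_tsum I

lemma exists_two_succ_fun (hT2 : AtLeastTwo T) :
    ∃ u v : List ℕ → ℕ, ∀ σ ∈ T, u σ ≠ v σ ∧ u σ ∈ succs T σ ∧ v σ ∈ succs T σ := by
  classical
  refine ⟨fun σ => if h : σ ∈ T then (hT2 σ h).choose else 0,
          fun σ => if h : σ ∈ T then (hT2 σ h).choose_spec.choose else 0, ?_⟩
  intro σ hσ
  simp only [dif_pos hσ]
  exact (hT2 σ hσ).choose_spec.choose_spec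

lemma level_double (hT : IsTree T) (hTfin : FinBranching T) (hT2 : AtLeastTwo T) (n : ℕ) :
    2 * (level T n).ncard ≤ (level T (n + 1)).ncard := by
  obtain ⟨u, v, huv⟩ := exists_two_succ_fun hT2
  set A := (fun σ => σ ++ [u σ]) '' level T n with hA
  set B := (fun σ => σ ++ [v σ]) '' level T n with hB
  have hlenfin : (level T n).Finite := level_finite hT hTfin n
  have hinj : ∀ w : List ℕ → ℕ, Set.InjOn (fun σ => σ ++ [w σ]) (level T n) := by
    intro w σ hσ τ hτ h
    exact (List.append_inj h (hσ.2.trans hτ.2.symm)).1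
  have hAcard : A.ncard = (level T n).ncard := Set.ncard_image_of_injOn (hinj u)
  have hBcard : B.ncard = (level T n).ncard := Set.ncard_image_of_injOn (hinj v)
  have hsub : A ∪ B ⊆ level T (n + 1) := by
    rintro τ (⟨σ, hσ, rfl⟩ | ⟨σ, hσ, rfl⟩)
    · exact (mem_level_succ_iff hT).mpr ⟨σ, hσ, u σ, (huv σ hσ.1).2.1, rfl⟩
    · exact (mem_level_succ_iff hT).mpr ⟨σ, hσ, v σ, (huv σ hσ.1).2.2, rfl⟩
  have hdisj : Disjoint A B := by
    rw [Set.disjoint_left]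
    rintro τ ⟨σ, hσ, rfl⟩ ⟨σ', hσ', heq⟩
    obtain ⟨h1, h2⟩ := List.append_inj heq (hσ'.2.trans hσ.2.symm)
    subst h1
    exact (huv σ' hσ'.1).1 (by simpa using h2.symm)
  calc 2 * (level T n).ncard = A.ncard + B.ncard := by rw [hAcard, hBcard]; ring
    _ = (A ∪ B).ncard := (Set.ncard_union_eq hdisj (hlenfin.image _) (hlenfin.image _)).symm
    _ ≤ (level T (n + 1)).ncard :=
        Set.ncard_le_ncard hsub (level_finite hT hTfin (n + 1))

lemma level_T_strictMono (hT : IsTree T) (hTfin : FinBranching T) (hT2 : AtLeastTwo T) :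
    StrictMono (fun n => (level T n).ncard) := by
  apply strictMono_nat_of_lt_succ
  intro n
  have h1 : 0 < (level T n).ncard :=
    level_ncard_pos' hT hTfin
      (level_nonempty hT (fun σ hσ => (hT2 σ hσ).imp (fun a ha => ha.choose_spec.2.1)))
      n
  have := level_double hT hTfin hT2 n
  omega

lemma treeDist_eq {f g : ℕ → ℕ} (h : ∃ n, f n ≠ g n) :
    treeDist T f g = 1 / ((level T (Nat.find h)).ncard : ℝ) := by
  classical
  rw [treeDist, dif_pos h]

lemma paths_injOn (hT : IsTree T) (hTfin : FinBranching T) (hT2 : AtLeastTwo T)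
    {X : Type*} [MetricSpace X] (φ : (ℕ → ℕ) → X)
    (hφ : ∀ f ∈ paths T, ∀ g ∈ paths T, dist (φ f) (φ g) = treeDist T f g)
    {f g : ℕ → ℕ} (hf : f ∈ paths T) (hg : g ∈ paths T) (h : φ f = φ g) : f = g := by
  classical
  by_contra hne
  obtain h' : ∃ n, f n ≠ g n := Function.ne_iff.mp hne
  have hd : dist (φ f) (φ g) = 1 / ((level T (Nat.find h')).ncard : ℝ) := by
    rw [hφ f hf g hg, treeDist_eq h']
  have hpos : 0 < (level T (Nat.find h')).ncard :=
    level_ncard_pos' hT hTfin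
      (level_nonempty hT (fun σ hσ => (hT2 σ hσ).imp (fun a ha => ha.choose_spec.2.1))) _
  have : (0 : ℝ) < 1 / ((level T (Nat.find h')).ncard : ℝ) := by positivity
  rw [h, dist_self] at hd
  linarith [hd ▸ this]

/-- With `T, S` as before, for every real `r` with
`0 < r < liminf_n log|S_n|/log|T_n|`, the `r`-dimensional Hausdorff measure of `[S]`
in the ultrametric space `[T]` is at least `1`. -/
theorem hausdorff_measure_ge_one
    (T S : Set (List ℕ))
    (hT : IsTree T) (hTfin : FinBranching T) (hT2 : AtLeastTwo T)
    (hST : S ⊆ T) (hS : IsTree S) (hSnl : NoLeaves S) (hSub : UnifBranching S)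
    {X : Type*} [MetricSpace X] [MeasurableSpace X] [BorelSpace X]
    (φ : (ℕ → ℕ) → X)
    (hφ : ∀ f ∈ paths T, ∀ g ∈ paths T, dist (φ f) (φ g) = treeDist T f g)
    (r : ℝ) (hr0 : 0 < r)
    (hr : r < Filter.liminf
        (fun n : ℕ => Real.log ((level S n).ncard) / Real.log ((level T n).ncard))
        Filter.atTop) :
    1 ≤ μH[r] (φ '' paths S) := by
  classical
  have hSfin : FinBranching S := fun σ hσ => (hTfin σ (hST hσ)).subset (fun a ha => hST ha)
  have hT1 : ∀ σ ∈ T, ∃ a, a ∈ succs T σ :=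
    fun σ hσ => (hT2 σ hσ).imp (fun a ha => ha.choose_spec.2.1)
  have hTlevne : ∀ n, (level T n).Nonempty := level_nonempty hT hT1
  have hSlevne : ∀ n, (level S n).Nonempty := level_nonempty hS hSnl
  have hcTpos : ∀ n, 0 < (level T n).ncard := level_ncard_pos' hT hTfin hTlevne
  have hcSpos : ∀ n, 0 < (level S n).ncard := level_ncard_pos' hS hSfin hSlevne
  have hcTmono : StrictMono (fun n => (level T n).ncard) := level_T_strictMono hT hTfin hT2
  have hPTS : paths S ⊆ paths T := fun f hf n => hST (hf n)
  -- extract the eventual inequality from the liminf hypothesis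
  have hbdd : IsBoundedUnder (· ≥ ·) atTop
      (fun n : ℕ => Real.log ((level S n).ncard) / Real.log ((level T n).ncard)) :=
    isBoundedUnder_of ⟨0, fun n => div_nonneg
      (Real.log_nonneg (by exact_mod_cast hcSpos n))
      (Real.log_nonneg (by exact_mod_cast hcTpos n))⟩
  obtain ⟨N₀, hN₀⟩ := eventually_atTop.mp (eventually_lt_of_lt_liminf hr hbdd)
  set K := max N₀ 1 with hK
  have hkey : ∀ n, K ≤ n → ((level T n).ncard : ℝ) ^ r ≤ ((level S n).ncard : ℝ) := by
    intro n hn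
    have h1 : 1 ≤ n := le_trans (le_max_right _ _) hn
    have hT2' : 2 ≤ (level T n).ncard := by
      have h2 := hcTmono (show 0 < n from h1)
      have hc0 : (level T 0).ncard = 1 := by rw [level_zero hT]; exact Set.ncard_singleton _
      simp only [hc0] at h2
      omega
    have hlogT : 0 < Real.log ((level T n).ncard) := Real.log_pos (by exact_mod_cast hT2')
    have hru := hN₀ n (le_trans (le_max_left _ _) hn)
    have hmul : r * Real.log ((level T n).ncard) < Real.log ((level S n).ncard) :=
      (lt_div_iff₀ hlogT).mp hru
    calc ((level T n).ncard : ℝ) ^ r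
        = Real.exp (Real.log ((level T n).ncard) * r) := by
          rw [Real.rpow_def_of_pos (by exact_mod_cast hcTpos n)]
      _ ≤ ((level S n).ncard : ℝ) := by
          rw [← Real.exp_log (x := ((level S n).ncard : ℝ)) (by exact_mod_cast hcSpos n)]
          exact Real.exp_le_exp.mpr (by linarith [hmul])
  -- levels of S have unboundedly small reciprocal size
  have hsmall : ∀ c : ℝ≥0∞, c ≠ 0 → c ≠ ⊤ → ∃ m, (((level S m).ncard : ℝ≥0∞))⁻¹ ≤ c := by
    intro c hc0 hctop
    have htend : Tendsto (fun n : ℕ => ((n : ℝ)) ^ r) atTop atTop :=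
      (tendsto_rpow_atTop hr0).comp tendsto_natCast_atTop_atTop
    obtain ⟨m, hm⟩ := ((htend.eventually_ge_atTop (1 / c.toReal)).and
      (eventually_ge_atTop K)).exists
    obtain ⟨hm2, hm1⟩ := hm
    have hTm : (m : ℝ) ≤ ((level T m).ncard : ℝ) := by
      exact_mod_cast (hcTmono.le_apply : m ≤ (level T m).ncard)
    have h2 : 1 / c.toReal ≤ ((level S m).ncard : ℝ) :=
      hm2.trans ((Real.rpow_le_rpow (by positivity) hTm hr0.le).trans (hkey m hm1))
    have hcpos : 0 < c.toReal := ENNReal.toReal_pos hc0 hctop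
    have h3 : 1 / ((level S m).ncard : ℝ) ≤ c.toReal :=
      (one_div_le hcpos (by exact_mod_cast hcSpos m)).mp h2
    refine ⟨m, ?_⟩
    rw [← ENNReal.ofReal_toReal hctop]
    calc (((level S m).ncard : ℝ≥0∞))⁻¹
        = ENNReal.ofReal (1 / ((level S m).ncard : ℝ)) := by
          rw [one_div, ENNReal.ofReal_inv_of_pos (by exact_mod_cast hcSpos m),
            ENNReal.ofReal_natCast]
      _ ≤ ENNReal.ofReal c.toReal := ENNReal.ofReal_le_ofReal h3
  set ε : ℝ≥0∞ := ENNReal.ofReal (1 / ((level T K).ncard : ℝ)) with hε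
  have hεpos : 0 < ε := ENNReal.ofReal_pos.mpr (by
    have := hcTpos K
    positivity)
  rw [MeasureTheory.Measure.hausdorffMeasure_apply]
  refine le_iSup_of_le ε (le_iSup_of_le hεpos ?_)
  refine le_iInf fun t => le_iInf fun htcov => le_iInf fun htdiam => ?_
  apply ENNReal.le_of_forall_pos_le_add
  intro δ hδ _
  have hconstr : ∀ i : ℕ, ∃ σi : List ℕ, σi ∈ S ∧
      ((φ ⁻¹' t i) ∩ paths S ⊆ {g | seg g σi.length = σi}) ∧
      (((level S σi.length).ncard : ℝ≥0∞))⁻¹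
        ≤ (⨆ _ : (t i).Nonempty, EMetric.diam (t i) ^ r) + (δ : ℝ≥0∞) * (2⁻¹) ^ (i + 1) := by
    intro i
    have hδi0 : (δ : ℝ≥0∞) * (2⁻¹) ^ (i + 1) ≠ 0 := by
      apply mul_ne_zero (by exact_mod_cast hδ.ne')
      exact pow_ne_zero _ (by simp)
    have hδitop : (δ : ℝ≥0∞) * (2⁻¹) ^ (i + 1) ≠ ⊤ := by
      apply ENNReal.mul_ne_top ENNReal.coe_ne_top
      exact ENNReal.pow_ne_top (by simp)
    obtain ⟨m, hm⟩ := hsmall _ hδi0 hδitop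
    by_cases hmeet : ((φ ⁻¹' t i) ∩ paths S).Nonempty
    · obtain ⟨f, hfp, hfS⟩ := hmeet
      by_cases hd : EMetric.diam (t i) = 0
      · refine ⟨seg f m, hfS m, ?_, ?_⟩
        · rintro g ⟨hgp, hgS⟩
          have hφeq : φ g = φ f := by
            have h1 : edist (φ g) (φ f) ≤ 0 := hd ▸ EMetric.edist_le_diam_of_mem (Set.mem_preimage.mp hgp) hfp
            rw [← edist_eq_zero]
            exact le_antisymm h1 zero_le
          have hgf := paths_injOn hT hTfin hT2 φ hφ (hPTS hgS) (hPTS hfS) hφeq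
          show seg g (seg f m).length = seg f m
          rw [hgf, seg_length]
        · simp only [seg_length]
          exact hm.trans le_add_self
      · have hdpos : 0 < EMetric.diam (t i) := zero_lt_iff.mpr hd
        have ht1 : Tendsto (fun n : ℕ => (((level T n).ncard : ℝ))) atTop atTop :=
          tendsto_natCast_atTop_atTop.comp hcTmono.tendsto_atTop
        have ht2 : Tendsto (fun n : ℕ => 1 / (((level T n).ncard : ℝ))) atTop (nhds 0) := by
          exact Tendsto.congr (fun n => by simp [one_div]) ht1.inv_tendsto_atTop
        have ht3 : Tendsto (fun n : ℕ => ENNReal.ofReal (1 / ((level T n).ncard : ℝ)))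
            atTop (nhds 0) := by
          rw [show (0 : ℝ≥0∞) = ENNReal.ofReal 0 by simp]
          exact (ENNReal.continuous_ofReal.tendsto 0).comp ht2
        have hex : ∃ n, ENNReal.ofReal (1 / ((level T n).ncard : ℝ)) ≤ EMetric.diam (t i) :=
          (ht3.eventually (ge_mem_nhds hdpos)).exists
        have hspec : ENNReal.ofReal (1 / ((level T (Nat.find hex)).ncard : ℝ))
            ≤ EMetric.diam (t i) := Nat.find_spec hex
        have hmin : ∀ k < Nat.find hex,
            EMetric.diam (t i) < ENNReal.ofReal (1 / ((level T k).ncard : ℝ)) :=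
          fun k hk => not_le.mp (Nat.find_min hex hk)
        have hnK : K ≤ Nat.find hex := by
          rw [Nat.le_find_iff]
          intro k hk
          rw [not_le]
          calc EMetric.diam (t i) ≤ ε := htdiam i
            _ < ENNReal.ofReal (1 / ((level T k).ncard : ℝ)) := by
                rw [hε, ENNReal.ofReal_lt_ofReal_iff (by
                  have := hcTpos k
                  positivity)]
                apply one_div_lt_one_div_of_lt (by exact_mod_cast hcTpos k)
                exact_mod_cast hcTmono hk
        set n := Nat.find hex with hn
        refine ⟨seg f n, hfS n, ?_, ?_⟩
        · rintro g ⟨hgp, hgS⟩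
          show seg g (seg f n).length = seg f n
          rw [seg_length]
          by_cases hgf : g = f
          · rw [hgf]
          · have hex2 : ∃ j, g j ≠ f j := Function.ne_iff.mp hgf
            have hnfind : n ≤ Nat.find hex2 := by
              by_contra hcon
              push_neg at hcon
              have hedist : edist (φ g) (φ f)
                  = ENNReal.ofReal (1 / ((level T (Nat.find hex2)).ncard : ℝ)) := by
                rw [edist_dist, hφ g (hPTS hgS) f (hPTS hfS), treeDist_eq hex2]
              have h1 := EMetric.edist_le_diam_of_mem (Set.mem_preimage.mp hgp) hfp
              rw [hedist] at h1
              exact absurd h1 (not_le.mpr (hmin _ hcon))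
            apply seg_eq_of_eqOn
            intro j hj
            exact not_not.mp (Nat.find_min hex2 (lt_of_lt_of_le hj hnfind))
        · have hnempty : (t i).Nonempty := ⟨φ f, hfp⟩
          rw [seg_length, iSup_pos hnempty]
          have hw : (((level S n).ncard : ℝ≥0∞))⁻¹ ≤ EMetric.diam (t i) ^ r := by
            calc (((level S n).ncard : ℝ≥0∞))⁻¹
                = ENNReal.ofReal (1 / ((level S n).ncard : ℝ)) := by
                  rw [one_div, ENNReal.ofReal_inv_of_pos (by exact_mod_cast hcSpos n),
                    ENNReal.ofReal_natCast]
              _ ≤ ENNReal.ofReal ((1 / ((level T n).ncard : ℝ)) ^ r) := by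
                  apply ENNReal.ofReal_le_ofReal
                  rw [Real.div_rpow zero_le_one (by positivity), Real.one_rpow]
                  apply one_div_le_one_div_of_le
                  · have := hcTpos n
                    positivity
                  · exact hkey n hnK
              _ = (ENNReal.ofReal (1 / ((level T n).ncard : ℝ))) ^ r := by
                  rw [ENNReal.ofReal_rpow_of_pos (by
                    have := hcTpos n
                    positivity)]
              _ ≤ EMetric.diam (t i) ^ r := ENNReal.rpow_le_rpow hspec hr0.le
          exact hw.trans le_self_add
    · obtain ⟨τ, hτ⟩ := hSlevne m
      refine ⟨τ, hτ.1, fun g hg => absurd ⟨g, hg⟩ hmeet, ?_⟩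
      rw [hτ.2]
      exact hm.trans le_add_self
  choose σs hσS hσcov hσw using hconstr
  have hcov : paths S ⊆ ⋃ i, {g | seg g (σs i).length = σs i} := by
    intro f hf
    have hmem : φ f ∈ ⋃ n, t n := htcov ⟨f, hf, rfl⟩
    rw [Set.mem_iUnion] at hmem ⊢
    obtain ⟨i, hi⟩ := hmem
    exact ⟨i, hσcov i ⟨hi, hf⟩⟩
  have hgeo : (∑' i : ℕ, ((2 : ℝ≥0∞))⁻¹ ^ (i + 1)) = 1 := by
    calc (∑' i : ℕ, ((2 : ℝ≥0∞))⁻¹ ^ (i + 1))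
        = (∑' i : ℕ, ((2 : ℝ≥0∞))⁻¹ ^ i) * 2⁻¹ := by
          simp_rw [pow_succ]
          rw [ENNReal.tsum_mul_right]
      _ = (1 - 2⁻¹)⁻¹ * 2⁻¹ := by rw [ENNReal.tsum_geometric]
      _ = 1 := by
          rw [ENNReal.one_sub_inv_two, inv_inv]
          exact ENNReal.mul_inv_cancel (by norm_num) (by norm_num)
  calc (1 : ℝ≥0∞)
      ≤ ∑' i, (((level S (σs i).length).ncard : ℝ≥0∞))⁻¹ :=
        counting hS hSfin hSub hSlevne σs hσS hcov
    _ ≤ ∑' i, ((⨆ _ : (t i).Nonempty, EMetric.diam (t i) ^ r) + (δ : ℝ≥0∞) * (2⁻¹) ^ (i + 1)) :=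
        ENNReal.tsum_le_tsum hσw
    _ = (∑' i, ⨆ _ : (t i).Nonempty, EMetric.diam (t i) ^ r)
        + (δ : ℝ≥0∞) * ∑' i : ℕ, ((2 : ℝ≥0∞))⁻¹ ^ (i + 1) := by
        rw [ENNReal.tsum_add, ENNReal.tsum_mul_left]
    _ = (∑' i, ⨆ _ : (t i).Nonempty, EMetric.diam (t i) ^ r) + δ := by
        rw [hgeo, mul_one]

end FractalTree
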